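/- Let M_N = {x ∈ ℝ^N : x_t ≤ x_{t+1} for all 1 ≤ t ≤ N−1} be the cone of nondecreasing sequences and let η^mono: ℝ^N → ℝ^N be the Euclidean projection onto M_N, i.e. η^mono(y) is the unique minimizer of ‖y − x‖₂² over x ∈ M_N. Define the risk R_N(μ) = E ‖η^mono(μ + Z) − μ‖₂² with Z ∼ N(0, I_N). Then for every μ ∈ M_N, the function t ↦ R_N(tμ) is monotone nondecreasing on [0,∞). -/

import Mathlib

open MeasureTheory ProbabilityTheory ENNReal

noncomputable section

/-- The standard Gaussian measure `N(0, I_N)` on `ℝ^N`. -/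
def stdGaussian (N : ℕ) : Measure (Fin N → ℝ) :=
  Measure.pi fun _ => gaussianReal 0 1

/-- The cone `M_N` of nondecreasing sequences in `ℝ^N`. -/
def monoCone (N : ℕ) : Set (Fin N → ℝ) := {x | Monotone x}

section Aux

variable {N : ℕ} {η : (Fin N → ℝ) → (Fin N → ℝ)}

/-- Variational inequality for the projection. -/
lemma vi_aux
    (hproj : ∀ y : Fin N → ℝ, η y ∈ monoCone N ∧
      ∀ x ∈ monoCone N, (∑ i, (y i - η y i) ^ 2) ≤ ∑ i, (y i - x i) ^ 2)
    (y x : Fin N → ℝ) (hx : x ∈ monoCone N) :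
    ∑ i, (y i - η y i) * (x i - η y i) ≤ 0 := by
  have hQ0 : (0:ℝ) ≤ ∑ i, (x i - η y i)^2 := Finset.sum_nonneg fun i _ => sq_nonneg _
  have key : ∀ θ : ℝ, 0 < θ → θ ≤ 1 →
      2 * (∑ i, (y i - η y i) * (x i - η y i)) ≤ θ * ∑ i, (x i - η y i)^2 := by
    intro θ hθ hθ1
    have hmem : (fun i => η y i + θ * (x i - η y i)) ∈ monoCone N := by
      have h1 : Monotone fun i => (1 - θ) * η y i := ((hproj y).1).const_mul (by linarith)
      have h2 : Monotone fun i => θ * x i := hx.const_mul hθ.le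
      have h3 := h1.add h2
      have he : (fun i => η y i + θ * (x i - η y i))
          = fun i => (1-θ) * η y i + θ * x i := by
        funext i; ring
      show Monotone _
      rw [he]; exact h3
    have hle := (hproj y).2 _ hmem
    have hexp : ∑ i, (y i - (fun i => η y i + θ * (x i - η y i)) i)^2
        = (∑ i, (y i - η y i)^2) - 2*θ*(∑ i, (y i - η y i) * (x i - η y i))
          + θ^2*(∑ i, (x i - η y i)^2) := by
      rw [Finset.mul_sum, Finset.mul_sum, ← Finset.sum_sub_distrib, ← Finset.sum_add_distrib]
      exact Finset.sum_congr rfl fun i _ => by ring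
    rw [hexp] at hle
    have h4 : θ * (2 * (∑ i, (y i - η y i) * (x i - η y i)))
        ≤ θ * (θ * ∑ i, (x i - η y i)^2) := by nlinarith [hle]
    exact le_of_mul_le_mul_left h4 hθ
  by_contra hcon
  push_neg at hcon
  set I := ∑ i, (y i - η y i) * (x i - η y i) with hI
  set Q := ∑ i, (x i - η y i)^2 with hQ
  have hden : (0:ℝ) < Q + 1 := by linarith
  have hθpos : 0 < min 1 (I / (Q+1)) := lt_min one_pos (div_pos hcon hden)
  have hk := key _ hθpos (min_le_left _ _)
  have h5 : min 1 (I / (Q+1)) * Q ≤ (I / (Q+1)) * Q :=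
    mul_le_mul_of_nonneg_right (min_le_right _ _) hQ0
  have h6 : (I / (Q+1)) * Q < I := by
    rw [div_mul_eq_mul_div, div_lt_iff₀ hden]; nlinarith
  linarith

/-- Orthogonality of the residual to the projection. -/
lemma orth_aux
    (hproj : ∀ y : Fin N → ℝ, η y ∈ monoCone N ∧
      ∀ x ∈ monoCone N, (∑ i, (y i - η y i) ^ 2) ≤ ∑ i, (y i - x i) ^ 2)
    (y : Fin N → ℝ) :
    ∑ i, (y i - η y i) * η y i = 0 := by
  have h0 : (fun _ : Fin N => (0:ℝ)) ∈ monoCone N := monotone_const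
  have h2 : (fun i => 2 * η y i) ∈ monoCone N := ((hproj y).1).const_mul (by norm_num)
  have v0 := vi_aux hproj y _ h0
  have v2 := vi_aux hproj y _ h2
  have e0 : ∑ i, (y i - η y i) * ((fun _ => (0:ℝ)) i - η y i)
      = -∑ i, (y i - η y i) * η y i := by
    rw [← Finset.sum_neg_distrib]
    exact Finset.sum_congr rfl fun i _ => by ring
  have e2 : ∑ i, (y i - η y i) * ((fun i => 2 * η y i) i - η y i)
      = ∑ i, (y i - η y i) * η y i :=
    Finset.sum_congr rfl fun i _ => by ring
  rw [e0] at v0; rw [e2] at v2; linarith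

/-- One step of the risk comparison. -/
lemma step_aux
    (hproj : ∀ y : Fin N → ℝ, η y ∈ monoCone N ∧
      ∀ x ∈ monoCone N, (∑ i, (y i - η y i) ^ 2) ≤ ∑ i, (y i - x i) ^ 2)
    (μ z : Fin N → ℝ) (u v : ℝ) (hu : 0 ≤ u) (huv : u ≤ v) :
    (∑ i, (η (u • μ + z) i - (u • μ) i)^2) - (v-u)^2 * (∑ i, μ i ^ 2)
      ≤ ∑ i, (η (v • μ + z) i - (v • μ) i)^2 := by
  simp only [Pi.add_apply, Pi.smul_apply, smul_eq_mul]
  set a := η (u • μ + z) with ha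
  set b := η (v • μ + z) with hb
  have haK : a ∈ monoCone N := (hproj _).1
  have hbK : b ∈ monoCone N := (hproj _).1
  have hM0 : (0:ℝ) ≤ ∑ i, μ i ^ 2 := Finset.sum_nonneg fun i _ => sq_nonneg _
  have hX0 : (0:ℝ) ≤ ∑ i, (b i - a i)^2 := Finset.sum_nonneg fun i _ => sq_nonneg _
  have hc : (0:ℝ) ≤ v - u := by linarith
  -- minimality at v-level against a
  have h1' := (hproj (v • μ + z)).2 a haK
  simp only [Pi.add_apply, Pi.smul_apply, smul_eq_mul, ← ha, ← hb] at h1'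
  have hexp1 : ∑ i, (v * μ i + z i - a i)^2
      = (∑ i, (u * μ i + z i - a i)^2)
        + (2*(v-u))*(∑ i, μ i * (u * μ i + z i - a i))
        + (v-u)^2*(∑ i, μ i ^ 2) := by
    rw [Finset.mul_sum, Finset.mul_sum, ← Finset.sum_add_distrib, ← Finset.sum_add_distrib]
    exact Finset.sum_congr rfl fun i _ => by ring
  rw [hexp1] at h1'
  -- variational inequalities and monotone operator bound
  have v1 := vi_aux hproj (u • μ + z) b hbK
  have v2 := vi_aux hproj (v • μ + z) a haK
  simp only [Pi.add_apply, Pi.smul_apply, smul_eq_mul, ← ha, ← hb] at v1 v2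
  have h2 : (∑ i, (b i - a i)^2) ≤ (v-u) * (∑ i, μ i * (b i - a i)) := by
    have hid : (∑ i, (b i - a i)^2) - (v-u) * (∑ i, μ i * (b i - a i))
        = (∑ i, (u * μ i + z i - a i) * (b i - a i))
          + (∑ i, (v * μ i + z i - b i) * (a i - b i)) := by
      rw [Finset.mul_sum, ← Finset.sum_sub_distrib, ← Finset.sum_add_distrib]
      exact Finset.sum_congr rfl fun i _ => by ring
    linarith [v1, v2, hid.le, hid.ge]
  have h3 : (∑ i, μ i * (b i - a i))^2 ≤ (∑ i, μ i ^ 2) * (∑ i, (b i - a i)^2) :=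
    Finset.sum_mul_sq_le_sq_mul_sq Finset.univ μ (fun i => b i - a i)
  have h5 : (∑ i, μ i ^ 2) * (∑ i, (b i - a i)^2)
      ≤ (∑ i, μ i ^ 2) * ((v-u) * (∑ i, μ i * (b i - a i))) :=
    mul_le_mul_of_nonneg_left h2 hM0
  have hd : (∑ i, μ i * (b i - a i)) ≤ (v-u) * (∑ i, μ i ^ 2) := by
    nlinarith [h3, h5, mul_nonneg hc hM0, hX0,
      sq_nonneg ((∑ i, μ i * (b i - a i)) - (v-u) * (∑ i, μ i ^ 2))]
  have h4 : (∑ i, μ i * (v * μ i + z i - b i)) - (∑ i, μ i * (u * μ i + z i - a i))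
      = (v-u)*(∑ i, μ i ^ 2) - (∑ i, μ i * (b i - a i)) := by
    rw [Finset.mul_sum, ← Finset.sum_sub_distrib, ← Finset.sum_sub_distrib]
    exact Finset.sum_congr rfl fun i _ => by ring
  -- orthogonality
  have ou := orth_aux hproj (u • μ + z)
  have ov := orth_aux hproj (v • μ + z)
  simp only [Pi.add_apply, Pi.smul_apply, smul_eq_mul, ← ha, ← hb] at ou ov
  -- risk identities
  have hFu : (∑ i, (a i - u * μ i)^2)
      = (∑ i, z i ^ 2) - (∑ i, (u * μ i + z i - a i)^2)
        + 2*u*(∑ i, μ i * (u * μ i + z i - a i))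
        - 2*(∑ i, (u * μ i + z i - a i) * a i) := by
    rw [Finset.mul_sum, Finset.mul_sum, ← Finset.sum_sub_distrib,
      ← Finset.sum_add_distrib, ← Finset.sum_sub_distrib]
    exact Finset.sum_congr rfl fun i _ => by ring
  have hFv : (∑ i, (b i - v * μ i)^2)
      = (∑ i, z i ^ 2) - (∑ i, (v * μ i + z i - b i)^2)
        + 2*v*(∑ i, μ i * (v * μ i + z i - b i))
        - 2*(∑ i, (v * μ i + z i - b i) * b i) := by
    rw [Finset.mul_sum, Finset.mul_sum, ← Finset.sum_sub_distrib,
      ← Finset.sum_add_distrib, ← Finset.sum_sub_distrib]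
    exact Finset.sum_congr rfl fun i _ => by ring
  have hv0 : (0:ℝ) ≤ v := le_trans hu huv
  have hAuv : (∑ i, μ i * (u * μ i + z i - a i)) ≤ (∑ i, μ i * (v * μ i + z i - b i)) := by
    linarith [h4, hd]
  have hvAuv : v * (∑ i, μ i * (u * μ i + z i - a i))
      ≤ v * (∑ i, μ i * (v * μ i + z i - b i)) :=
    mul_le_mul_of_nonneg_left hAuv hv0
  nlinarith [h1', hFu, hFv, ou, ov, hvAuv]

end Aux

/-- **Monotonicity of the monotone-regression risk along rays.** -/
theorem monoReg_risk_monotone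
    (N : ℕ) (η : (Fin N → ℝ) → (Fin N → ℝ)) (hmeas : Measurable η)
    (hproj : ∀ y : Fin N → ℝ, η y ∈ monoCone N ∧
      ∀ x ∈ monoCone N, (∑ i, (y i - η y i) ^ 2) ≤ ∑ i, (y i - x i) ^ 2)
    (μ : Fin N → ℝ) (hμ : μ ∈ monoCone N) :
    ∀ s t : ℝ, 0 ≤ s → s ≤ t →
      (∫⁻ z, ENNReal.ofReal (∑ i, (η (s • μ + z) i - (s • μ) i) ^ 2)
          ∂(stdGaussian N)) ≤
      (∫⁻ z, ENNReal.ofReal (∑ i, (η (t • μ + z) i - (t • μ) i) ^ 2)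
          ∂(stdGaussian N)) := by
  intro s t hs hst
  refine lintegral_mono fun z => ENNReal.ofReal_le_ofReal ?_
  -- pointwise inequality
  have hM0 : (0:ℝ) ≤ ∑ i, μ i ^ 2 := Finset.sum_nonneg fun i _ => sq_nonneg _
  have ladder : ∀ (k : ℕ) (δ : ℝ), 0 ≤ δ →
      (∑ i, (η (s • μ + z) i - (s • μ) i) ^ 2) - k * (δ^2 * (∑ i, μ i ^ 2))
        ≤ ∑ i, (η ((s + k*δ) • μ + z) i - ((s + k*δ) • μ) i) ^ 2 := by
    intro k
    induction k with
    | zero => intro δ hδ; simp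
    | succ k ih =>
        intro δ hδ
        have hk0 : (0:ℝ) ≤ (k:ℝ) * δ := mul_nonneg (Nat.cast_nonneg k) hδ
        have hstep := step_aux hproj μ z (s + (k:ℝ)*δ) (s + (k:ℝ)*δ + δ)
          (by linarith) (by linarith)
        rw [show (s + (k:ℝ)*δ + δ) - (s + (k:ℝ)*δ) = δ from by ring] at hstep
        have ihd := ih δ hδ
        push_cast
        rw [show s + ((k:ℝ)+1)*δ = s + (k:ℝ)*δ + δ from by ring]
        linarith [ihd, hstep]
  by_contra hcon
  push_neg at hcon
  set Fs := ∑ i, (η (s • μ + z) i - (s • μ) i) ^ 2 with hFs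
  set Ft := ∑ i, (η (t • μ + z) i - (t • μ) i) ^ 2 with hFt
  set ε := (Fs - Ft)/2 with hε
  have hεpos : 0 < ε := by rw [hε]; linarith
  obtain ⟨n, hn⟩ := exists_nat_gt ((t-s)^2 * (∑ i, μ i ^ 2) / ε)
  have hn0 : 0 < (n:ℝ) := lt_of_le_of_lt (by positivity) hn
  have hδ0 : 0 ≤ (t-s)/n := div_nonneg (by linarith) hn0.le
  have hl := ladder n ((t-s)/n) hδ0
  have harg : s + (n:ℝ) * ((t-s)/n) = t := by
    field_simp; ring
  rw [harg] at hl
  have heq : (n:ℝ) * (((t-s)/n)^2 * (∑ i, μ i ^ 2))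
      = (t-s)^2 * (∑ i, μ i ^ 2) / n := by
    field_simp
  have h7 : (t-s)^2 * (∑ i, μ i ^ 2) < n * ε := by
    rw [div_lt_iff₀ hεpos] at hn; linarith
  have hb : (n:ℝ) * (((t-s)/n)^2 * (∑ i, μ i ^ 2)) ≤ ε := by
    rw [heq, div_le_iff₀ hn0]; nlinarith [h7]
  rw [← hFt] at hl
  have : Fs - ε ≤ Ft := by linarith
  rw [hε] at this
  linarith

end
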